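/- Let E be a real Banach space, let e : ℝ → E be continuous, and let t, h ∈ ℝ with h ≥ 0. Then (1/4) ∫₀^h ( ∫₀^ζ ( ∫₀^ξ ( ∫₀^χ ( e(t+χ) − e(t+ν) ) dν ) dχ ) dξ ) dζ = (1/24) ∫₀^h ( 4ζ³ − 9hζ² + 6h²ζ − h³ ) e(t+ζ) dζ. -/

import Mathlib

open intervalIntegral MeasureTheory

section Aux

variable {E : Type*} [NormedAddCommGroup E] [NormedSpace ℝ E] [CompleteSpace E]

private lemma prim_continuous (G : ℝ → E) (hG : Continuous G) :
    Continuous fun x => ∫ χ in (0:ℝ)..x, G χ :=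
  intervalIntegral.continuous_primitive (fun a b => hG.intervalIntegrable a b) 0

/-- Integration by parts for a scalar times a primitive. -/
private lemma partsC (c C : ℝ → ℝ) (G : ℝ → E) (hc : Continuous c) (hG : Continuous G)
    (hC : ∀ x, HasDerivAt C (c x) x) (hC0 : C 0 = 0) (a : ℝ) :
    (∫ ζ in (0:ℝ)..a, c ζ • (∫ χ in (0:ℝ)..ζ, G χ))
      = C a • (∫ χ in (0:ℝ)..a, G χ) - ∫ ζ in (0:ℝ)..a, C ζ • G ζ := by
  set V : ℝ → E := fun x => ∫ χ in (0:ℝ)..x, G χ with hVdef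
  have hV : Continuous V := prim_continuous G hG
  have hCc : Continuous C :=
    continuous_iff_continuousAt.2 fun x => (hC x).continuousAt
  have hderiv : ∀ x ∈ Set.uIcc (0:ℝ) a,
      HasDerivAt (fun y => C y • V y) (c x • V x + C x • G x) x := by
    intro x _
    have hVd : HasDerivAt V (G x) x :=
      intervalIntegral.integral_hasDerivAt_right (hG.intervalIntegrable 0 x)
        (hG.stronglyMeasurable.stronglyMeasurableAtFilter) hG.continuousAt
    have := (hC x).smul hVd
    -- (hC x).smul hVd : HasDerivAt (fun y => C y • V y) (C x • G x + c x • V x) x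
    rw [add_comm]; exact this
  have hint : IntervalIntegrable (fun x => c x • V x + C x • G x) volume 0 a :=
    ((hc.smul hV).add (hCc.smul hG)).intervalIntegrable _ _
  have key := intervalIntegral.integral_eq_sub_of_hasDerivAt hderiv hint
  rw [intervalIntegral.integral_add (show IntervalIntegrable (fun x => c x • V x) volume 0 a from (hc.smul hV).intervalIntegrable _ _)
      (show IntervalIntegrable (fun x => C x • G x) volume 0 a from (hCc.smul hG).intervalIntegrable _ _)] at key
  rw [hC0, zero_smul] at key
  have : (∫ ζ in (0:ℝ)..a, c ζ • V ζ)
      = C a • V a - ∫ ζ in (0:ℝ)..a, C ζ • G ζ := by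
    rw [eq_sub_iff_add_eq, key, sub_zero]
  simpa [hVdef] using this

/-- Innermost reduction. -/
private lemma step1 (g : ℝ → E) (hg : Continuous g) (χ : ℝ) :
    (∫ ν in (0:ℝ)..χ, (g χ - g ν)) = χ • g χ - ∫ ν in (0:ℝ)..χ, g ν := by
  rw [intervalIntegral.integral_sub intervalIntegrable_const (hg.intervalIntegrable _ _),
    intervalIntegral.integral_const]
  simp

/-- Second reduction. -/
private lemma step2 (g : ℝ → E) (hg : Continuous g) (ξ : ℝ) :
    (∫ χ in (0:ℝ)..ξ, ∫ ν in (0:ℝ)..χ, (g χ - g ν))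
      = (2:ℝ) • (∫ χ in (0:ℝ)..ξ, χ • g χ) - ξ • ∫ χ in (0:ℝ)..ξ, g χ := by
  rw [intervalIntegral.integral_congr (g := fun χ => χ • g χ - ∫ ν in (0:ℝ)..χ, g ν)
      (fun χ _ => step1 g hg χ)]
  have hxg : Continuous fun χ : ℝ => χ • g χ := continuous_id.smul hg
  rw [intervalIntegral.integral_sub (hxg.intervalIntegrable _ _)
      ((prim_continuous g hg).intervalIntegrable _ _)]
  have h1 := partsC (fun _ => (1:ℝ)) id g continuous_const hg
    (fun x => hasDerivAt_id x) rfl ξ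
  simp only [one_smul, id_eq] at h1
  rw [h1]
  module

/-- Third reduction, to moment integrals. -/
private lemma step3 (g : ℝ → E) (hg : Continuous g) (ζ : ℝ) :
    (∫ ξ in (0:ℝ)..ζ, ∫ χ in (0:ℝ)..ξ, ∫ ν in (0:ℝ)..χ, (g χ - g ν))
      = (2 * ζ) • (∫ χ in (0:ℝ)..ζ, χ • g χ)
        - (3/2 : ℝ) • (∫ χ in (0:ℝ)..ζ, (χ^2) • g χ)
        - (ζ^2 / 2) • ∫ χ in (0:ℝ)..ζ, g χ := by
  have hxg : Continuous fun χ : ℝ => χ • g χ := continuous_id.smul hg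
  have cA : Continuous fun ξ : ℝ => (2:ℝ) • (∫ χ in (0:ℝ)..ξ, χ • g χ) :=
    continuous_const.smul (prim_continuous _ hxg)
  have cB : Continuous fun ξ : ℝ => ξ • ∫ χ in (0:ℝ)..ξ, g χ :=
    continuous_id.smul (prim_continuous g hg)
  rw [intervalIntegral.integral_congr
      (g := fun ξ => (2:ℝ) • (∫ χ in (0:ℝ)..ξ, χ • g χ) - ξ • ∫ χ in (0:ℝ)..ξ, g χ)
      (fun ξ _ => step2 g hg ξ)]
  rw [intervalIntegral.integral_sub (cA.intervalIntegrable _ _) (cB.intervalIntegrable _ _)]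
  rw [intervalIntegral.integral_smul]
  have h1 := partsC (fun _ => (1:ℝ)) id (fun χ => χ • g χ) continuous_const hxg
    (fun x => hasDerivAt_id x) rfl ζ
  simp only [one_smul, id_eq] at h1
  have h2 := partsC (fun x => x) (fun x => x^2 / 2) g continuous_id hg
    (fun x => by
      simpa using (hasDerivAt_pow 2 x).div_const 2) (by norm_num) ζ
  rw [h1, h2]
  have e1 : (∫ ξ in (0:ℝ)..ζ, ξ • ξ • g ξ) = ∫ ξ in (0:ℝ)..ζ, (ξ^2) • g ξ := by
    refine intervalIntegral.integral_congr fun ξ _ => ?_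
    rw [smul_smul, ← sq]
  have e2 : (∫ ξ in (0:ℝ)..ζ, (ξ^2 / 2) • g ξ)
      = (1/2 : ℝ) • ∫ ξ in (0:ℝ)..ζ, (ξ^2) • g ξ := by
    rw [← intervalIntegral.integral_smul]
    refine intervalIntegral.integral_congr fun ξ _ => ?_
    rw [smul_smul]; ring_nf
  rw [e1, e2]
  module

end Aux

theorem p3_integral_reduction {E : Type*} [NormedAddCommGroup E] [NormedSpace ℝ E]
    [CompleteSpace E] (e : ℝ → E) (he : Continuous e) (t h : ℝ) (hh : 0 ≤ h) :
    (1 / 4 : ℝ) •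
        (∫ ζ in (0:ℝ)..h, ∫ ξ in (0:ℝ)..ζ, ∫ χ in (0:ℝ)..ξ,
          ∫ ν in (0:ℝ)..χ, (e (t + χ) - e (t + ν)))
      = (1 / 24 : ℝ) •
          ∫ ζ in (0:ℝ)..h, (4 * ζ ^ 3 - 9 * h * ζ ^ 2 + 6 * h ^ 2 * ζ - h ^ 3) • e (t + ζ) := by
  set g : ℝ → E := fun x => e (t + x) with hgdef
  have hg : Continuous g := he.comp (continuous_const.add continuous_id)
  have hxg : Continuous fun χ : ℝ => χ • g χ := continuous_id.smul hg
  have hx2g : Continuous fun χ : ℝ => (χ^2) • g χ := (continuous_pow 2).smul hg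
  have hx3g : Continuous fun χ : ℝ => (χ^3) • g χ := (continuous_pow 3).smul hg
  -- reduce LHS using step3
  rw [intervalIntegral.integral_congr
      (g := fun ζ => (2 * ζ) • (∫ χ in (0:ℝ)..ζ, χ • g χ)
        - (3/2 : ℝ) • (∫ χ in (0:ℝ)..ζ, (χ^2) • g χ)
        - (ζ^2 / 2) • ∫ χ in (0:ℝ)..ζ, g χ)
      (fun ζ _ => step3 g hg ζ)]
  have c1 : Continuous fun ζ : ℝ => (2 * ζ) • (∫ χ in (0:ℝ)..ζ, χ • g χ) :=
    (continuous_const.mul continuous_id).smul (prim_continuous _ hxg)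
  have c2 : Continuous fun ζ : ℝ => (3/2 : ℝ) • (∫ χ in (0:ℝ)..ζ, (χ^2) • g χ) :=
    continuous_const.smul (prim_continuous _ hx2g)
  have c3 : Continuous fun ζ : ℝ => (ζ^2 / 2) • ∫ χ in (0:ℝ)..ζ, g χ :=
    ((continuous_pow 2).div_const 2).smul (prim_continuous g hg)
  rw [intervalIntegral.integral_sub (show IntervalIntegrable (fun ζ : ℝ => (2 * ζ) • (∫ χ in (0:ℝ)..ζ, χ • g χ) - (3/2 : ℝ) • (∫ χ in (0:ℝ)..ζ, (χ^2) • g χ)) volume 0 h from (c1.sub c2).intervalIntegrable _ _)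
      (c3.intervalIntegrable _ _),
    intervalIntegral.integral_sub (c1.intervalIntegrable _ _) (c2.intervalIntegrable _ _)]
  rw [intervalIntegral.integral_smul]
  -- term 1 : ∫ (2ζ) • (∫₀^ζ χ•g)
  have h1 := partsC (fun x => 2 * x) (fun x => x^2) (fun χ => χ • g χ)
    (continuous_const.mul continuous_id) hxg
    (fun x => by simpa [mul_comm] using hasDerivAt_pow 2 x) (by norm_num) h
  -- term 2 : ∫ (∫₀^ζ χ²•g)
  have h2 := partsC (fun _ => (1:ℝ)) id (fun χ => (χ^2) • g χ) continuous_const hx2g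
    (fun x => hasDerivAt_id x) rfl h
  simp only [one_smul, id_eq] at h2
  -- term 3 : ∫ (ζ²/2) • (∫₀^ζ g)
  have h3 := partsC (fun x => x^2 / 2) (fun x => x^3 / 6) g
    ((continuous_pow 2).div_const 2) hg
    (fun x => by
      have := (hasDerivAt_pow 3 x).div_const 6
      refine this.congr_deriv ?_
      push_cast; ring) (by norm_num) h
  rw [h1, h2, h3]
  -- convert the inner leftover integrals to moment integrals
  have e1 : (∫ ζ in (0:ℝ)..h, (ζ^2) • ζ • g ζ) = ∫ ζ in (0:ℝ)..h, (ζ^3) • g ζ := by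
    refine intervalIntegral.integral_congr fun ζ _ => ?_
    rw [smul_smul]; ring_nf
  have e2 : (∫ ζ in (0:ℝ)..h, ζ • (ζ^2) • g ζ) = ∫ ζ in (0:ℝ)..h, (ζ^3) • g ζ := by
    refine intervalIntegral.integral_congr fun ζ _ => ?_
    rw [smul_smul]; ring_nf
  have e3 : (∫ ζ in (0:ℝ)..h, (ζ^3 / 6) • g ζ)
      = (1/6 : ℝ) • ∫ ζ in (0:ℝ)..h, (ζ^3) • g ζ := by
    rw [← intervalIntegral.integral_smul]
    refine intervalIntegral.integral_congr fun ζ _ => ?_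
    rw [smul_smul]; ring_nf
  rw [e1, e2, e3]
  -- expand RHS integrand
  have eR : (∫ ζ in (0:ℝ)..h, (4 * ζ ^ 3 - 9 * h * ζ ^ 2 + 6 * h ^ 2 * ζ - h ^ 3) • g ζ)
      = (4:ℝ) • (∫ ζ in (0:ℝ)..h, (ζ^3) • g ζ)
        - (9 * h) • (∫ ζ in (0:ℝ)..h, (ζ^2) • g ζ)
        + (6 * h^2) • (∫ ζ in (0:ℝ)..h, ζ • g ζ)
        - (h^3) • (∫ ζ in (0:ℝ)..h, g ζ) := by
    rw [← intervalIntegral.integral_smul, ← intervalIntegral.integral_smul,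
      ← intervalIntegral.integral_smul, ← intervalIntegral.integral_smul]
    rw [← intervalIntegral.integral_sub
        (show IntervalIntegrable (fun x : ℝ => (4:ℝ) • x ^ 3 • g x) volume 0 h from
          (continuous_const.smul hx3g).intervalIntegrable _ _)
        (show IntervalIntegrable (fun x : ℝ => (9 * h) • x ^ 2 • g x) volume 0 h from
          (continuous_const.smul hx2g).intervalIntegrable _ _),
      ← intervalIntegral.integral_add
        (show IntervalIntegrable (fun x : ℝ => (4:ℝ) • x ^ 3 • g x - (9 * h) • x ^ 2 • g x)
          volume 0 h from
          ((continuous_const.smul hx3g).sub (continuous_const.smul hx2g)).intervalIntegrable _ _)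
        (show IntervalIntegrable (fun x : ℝ => (6 * h ^ 2) • x • g x) volume 0 h from
          (continuous_const.smul hxg).intervalIntegrable _ _),
      ← intervalIntegral.integral_sub
        (show IntervalIntegrable (fun x : ℝ => (4:ℝ) • x ^ 3 • g x - (9 * h) • x ^ 2 • g x
          + (6 * h ^ 2) • x • g x) volume 0 h from
          (((continuous_const.smul hx3g).sub (continuous_const.smul hx2g)).add
          (continuous_const.smul hxg)).intervalIntegrable _ _)
        (show IntervalIntegrable (fun x : ℝ => h ^ 3 • g x) volume 0 h from
          (continuous_const.smul hg).intervalIntegrable _ _)]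
    refine intervalIntegral.integral_congr fun ζ _ => ?_
    module
  rw [eR]
  module
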